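/- Vega of the barrier-pricing parameter 𝒜: fix K > 0, T > 0, S > 0, r_d, r_f ∈ ℝ and φ ∈ {1, −1}. Then the function σ ↦ 𝒜(σ) = φ(S e^{-r_f T} N(φx₁(σ)) − K e^{-r_d T} N(φ(x₁(σ) − σ√T))), where x₁(σ) = ln(S/K)/(σ√T) + (1+α(σ))σ√T and α(σ) = (r_d − r_f − σ²/2)/σ², is differentiable at every σ > 0 with derivative ∂𝒜/∂σ = (K√T/√(2π)) · (S/K)^{−r_d/σ² + r_f/σ² + 1/2} · exp(−(4 ln²(S/K) + T²(4r_d² + r_d(4σ² − 8r_f) + (2r_f + σ²)²))/(8σ²T)). -/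

import Mathlib

noncomputable def stdNormalCdf (z : ℝ) : ℝ :=
  ∫ x in Set.Iic z, (1 / Real.sqrt (2 * Real.pi)) * Real.exp (-x ^ 2 / 2)

lemma gauss_integrable :
    MeasureTheory.Integrable (fun x : ℝ => (1 / Real.sqrt (2 * Real.pi)) * Real.exp (-x ^ 2 / 2)) := by
  have h := (integrable_exp_neg_mul_sq (by norm_num : (0:ℝ) < 1/2)).const_mul
      (1 / Real.sqrt (2 * Real.pi))
  convert h using 2 with x
  ring_nf

lemma gauss_continuous :
    Continuous (fun x : ℝ => (1 / Real.sqrt (2 * Real.pi)) * Real.exp (-x ^ 2 / 2)) := by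
  continuity

lemma hasDerivAt_stdNormalCdf (z : ℝ) :
    HasDerivAt stdNormalCdf (1 / Real.sqrt (2 * Real.pi) * Real.exp (-z ^ 2 / 2)) z := by
  set f : ℝ → ℝ := fun x => (1 / Real.sqrt (2 * Real.pi)) * Real.exp (-x ^ 2 / 2) with hf
  have key : ∀ u : ℝ, stdNormalCdf u = (∫ x in Set.Iic (0:ℝ), f x) + ∫ x in (0:ℝ)..u, f x := by
    intro u
    have := intervalIntegral.integral_Iic_sub_Iic (μ := MeasureTheory.volume) (f := f)
        gauss_integrable.integrableOn gauss_integrable.integrableOn (a := 0) (b := u)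
    simp only [stdNormalCdf]
    linarith [this]
  have hD : HasDerivAt (fun u => (∫ x in Set.Iic (0:ℝ), f x) + ∫ x in (0:ℝ)..u, f x) (f z) z := by
    exact (intervalIntegral.integral_hasDerivAt_right
      gauss_integrable.intervalIntegrable
      gauss_continuous.aestronglyMeasurable.stronglyMeasurableAtFilter
      gauss_continuous.continuousAt).const_add _
  exact hD.congr_of_eventuallyEq (Filter.Eventually.of_forall key)

/-- Vega of the barrier-pricing parameter `𝒜`. -/
theorem vega_A (K T S rd rf φ : ℝ) (hK : 0 < K) (hT : 0 < T) (hS : 0 < S)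
    (hφ : φ = 1 ∨ φ = -1) (σ : ℝ) (hσ : 0 < σ) :
    HasDerivAt (fun v : ℝ =>
        φ * (S * Real.exp (-rf * T) *
            stdNormalCdf (φ * (Real.log (S / K) / (v * Real.sqrt T) +
              (1 + (rd - rf - v ^ 2 / 2) / v ^ 2) * (v * Real.sqrt T))) -
          K * Real.exp (-rd * T) *
            stdNormalCdf (φ * (Real.log (S / K) / (v * Real.sqrt T) +
              (1 + (rd - rf - v ^ 2 / 2) / v ^ 2) * (v * Real.sqrt T) - v * Real.sqrt T))))
      (K * Real.sqrt T / Real.sqrt (2 * Real.pi) *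
        (S / K) ^ (-rd / σ ^ 2 + rf / σ ^ 2 + 1 / 2) *
        Real.exp (-(4 * Real.log (S / K) ^ 2 +
            T ^ 2 * (4 * rd ^ 2 + rd * (4 * σ ^ 2 - 8 * rf) + (2 * rf + σ ^ 2) ^ 2)) /
          (8 * σ ^ 2 * T))) σ := by
  set s : ℝ := Real.sqrt T with hs_def
  have hs : 0 < s := Real.sqrt_pos.mpr hT
  have hs2 : s ^ 2 = T := Real.sq_sqrt hT.le
  set A : ℝ := Real.log (S / K) / s + s * (rd - rf) with hA
  -- derivatives of the simplified arguments
  have hg1 : HasDerivAt (fun v : ℝ => A * v⁻¹ + s / 2 * v)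
      (A * -(σ ^ 2)⁻¹ + s / 2 * 1) σ :=
    ((hasDerivAt_inv hσ.ne').const_mul A).add ((hasDerivAt_id σ).const_mul (s / 2))
  have hg2 : HasDerivAt (fun v : ℝ => A * v⁻¹ - s / 2 * v)
      (A * -(σ ^ 2)⁻¹ - s / 2 * 1) σ :=
    ((hasDerivAt_inv hσ.ne').const_mul A).sub ((hasDerivAt_id σ).const_mul (s / 2))
  have hN1 : HasDerivAt (fun v : ℝ => stdNormalCdf (φ * (A * v⁻¹ + s / 2 * v)))
      (1 / Real.sqrt (2 * Real.pi) * Real.exp (-(φ * (A * σ⁻¹ + s / 2 * σ)) ^ 2 / 2) *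
        (φ * (A * -(σ ^ 2)⁻¹ + s / 2 * 1))) σ :=
    by have h := (hasDerivAt_stdNormalCdf (φ * (A * σ⁻¹ + s / 2 * σ))).comp σ (hg1.const_mul φ); exact h
  have hN2 : HasDerivAt (fun v : ℝ => stdNormalCdf (φ * (A * v⁻¹ - s / 2 * v)))
      (1 / Real.sqrt (2 * Real.pi) * Real.exp (-(φ * (A * σ⁻¹ - s / 2 * σ)) ^ 2 / 2) *
        (φ * (A * -(σ ^ 2)⁻¹ - s / 2 * 1))) σ :=
    by have h := (hasDerivAt_stdNormalCdf (φ * (A * σ⁻¹ - s / 2 * σ))).comp σ (hg2.const_mul φ); exact h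
  have hF : HasDerivAt (fun v : ℝ =>
      φ * (S * Real.exp (-rf * T) * stdNormalCdf (φ * (A * v⁻¹ + s / 2 * v)) -
           K * Real.exp (-rd * T) * stdNormalCdf (φ * (A * v⁻¹ - s / 2 * v))))
      (φ * (S * Real.exp (-rf * T) *
          (1 / Real.sqrt (2 * Real.pi) * Real.exp (-(φ * (A * σ⁻¹ + s / 2 * σ)) ^ 2 / 2) *
            (φ * (A * -(σ ^ 2)⁻¹ + s / 2 * 1))) -
        K * Real.exp (-rd * T) *
          (1 / Real.sqrt (2 * Real.pi) * Real.exp (-(φ * (A * σ⁻¹ - s / 2 * σ)) ^ 2 / 2) *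
            (φ * (A * -(σ ^ 2)⁻¹ - s / 2 * 1))))) σ :=
    ((hN1.const_mul (S * Real.exp (-rf * T))).sub
      (hN2.const_mul (K * Real.exp (-rd * T)))).const_mul φ
  have hev : (fun v : ℝ =>
        φ * (S * Real.exp (-rf * T) *
            stdNormalCdf (φ * (Real.log (S / K) / (v * s) +
              (1 + (rd - rf - v ^ 2 / 2) / v ^ 2) * (v * s))) -
          K * Real.exp (-rd * T) *
            stdNormalCdf (φ * (Real.log (S / K) / (v * s) +
              (1 + (rd - rf - v ^ 2 / 2) / v ^ 2) * (v * s) - v * s))))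
      =ᶠ[nhds σ] (fun v : ℝ =>
      φ * (S * Real.exp (-rf * T) * stdNormalCdf (φ * (A * v⁻¹ + s / 2 * v)) -
           K * Real.exp (-rd * T) * stdNormalCdf (φ * (A * v⁻¹ - s / 2 * v)))) := by
    filter_upwards [isOpen_Ioi.mem_nhds hσ] with v hv
    have hv0 : v ≠ 0 := ne_of_gt hv
    have h1 : Real.log (S / K) / (v * s) +
        (1 + (rd - rf - v ^ 2 / 2) / v ^ 2) * (v * s) = A * v⁻¹ + s / 2 * v := by
      rw [hA]; field_simp; ring
    have h2 : Real.log (S / K) / (v * s) +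
        (1 + (rd - rf - v ^ 2 / 2) / v ^ 2) * (v * s) - v * s = A * v⁻¹ - s / 2 * v := by
      rw [hA]; field_simp; ring
    rw [h2, h1]
  have hfinal := hF.congr_of_eventuallyEq hev
  -- key exponential identities
  have e1 : S * Real.exp (-rf * T) * Real.exp (-(A * σ⁻¹ + s / 2 * σ) ^ 2 / 2) =
      K * Real.exp (-rd * T) * Real.exp (-(A * σ⁻¹ - s / 2 * σ) ^ 2 / 2) := by
    rw [← Real.exp_log hS, ← Real.exp_log hK, ← Real.exp_add, ← Real.exp_add,
      ← Real.exp_add, ← Real.exp_add]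
    congr 1
    rw [hA, Real.log_div hS.ne' hK.ne', ← hs2]
    field_simp
    ring
  have e2 : K * Real.exp (-rd * T) * Real.exp (-(A * σ⁻¹ - s / 2 * σ) ^ 2 / 2) =
      K * (S / K) ^ (-rd / σ ^ 2 + rf / σ ^ 2 + 1 / 2) *
        Real.exp (-(4 * Real.log (S / K) ^ 2 +
            T ^ 2 * (4 * rd ^ 2 + rd * (4 * σ ^ 2 - 8 * rf) + (2 * rf + σ ^ 2) ^ 2)) /
          (8 * σ ^ 2 * T)) := by
    rw [Real.rpow_def_of_pos (div_pos hS hK), mul_assoc, mul_assoc,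
      ← Real.exp_add, ← Real.exp_add]
    congr 1
    rw [hA, Real.log_div hS.ne' hK.ne', ← hs2]
    field_simp
    ring
  have hDeq : φ * (S * Real.exp (-rf * T) *
          (1 / Real.sqrt (2 * Real.pi) * Real.exp (-(φ * (A * σ⁻¹ + s / 2 * σ)) ^ 2 / 2) *
            (φ * (A * -(σ ^ 2)⁻¹ + s / 2 * 1))) -
        K * Real.exp (-rd * T) *
          (1 / Real.sqrt (2 * Real.pi) * Real.exp (-(φ * (A * σ⁻¹ - s / 2 * σ)) ^ 2 / 2) *
            (φ * (A * -(σ ^ 2)⁻¹ - s / 2 * 1)))) =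
      K * s / Real.sqrt (2 * Real.pi) *
        (S / K) ^ (-rd / σ ^ 2 + rf / σ ^ 2 + 1 / 2) *
        Real.exp (-(4 * Real.log (S / K) ^ 2 +
            T ^ 2 * (4 * rd ^ 2 + rd * (4 * σ ^ 2 - 8 * rf) + (2 * rf + σ ^ 2) ^ 2)) /
          (8 * σ ^ 2 * T)) := by
    have hsq1 : (φ * (A * σ⁻¹ + s / 2 * σ)) ^ 2 = (A * σ⁻¹ + s / 2 * σ) ^ 2 := by
      rcases hφ with rfl | rfl <;> ring
    have hsq2 : (φ * (A * σ⁻¹ - s / 2 * σ)) ^ 2 = (A * σ⁻¹ - s / 2 * σ) ^ 2 := by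
      rcases hφ with rfl | rfl <;> ring
    rw [hsq1, hsq2]
    rcases hφ with rfl | rfl
    · linear_combination
        (1 / Real.sqrt (2 * Real.pi) * (A * -(σ ^ 2)⁻¹ + s / 2 * 1)) * e1 +
        (1 / Real.sqrt (2 * Real.pi) * s) * e2
    · linear_combination
        (1 / Real.sqrt (2 * Real.pi) * (A * -(σ ^ 2)⁻¹ + s / 2 * 1)) * e1 +
        (1 / Real.sqrt (2 * Real.pi) * s) * e2
  exact hDeq ▸ hfinal
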